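/- For every real x, the Mainardi function M_{1/2} satisfies Σ_{k=0}^∞ (−x)^k / (k! · Γ((1−k)/2)) = e^{−x²/4} / √π, where terms with (1−k)/2 a nonpositive integer are interpreted as 0 (the convention 1/Γ(z) = 0 at the poles of Γ). -/

import Mathlib

set_option maxHeartbeats 1000000


open Real

lemma gamma_half_sub (n : ℕ) :
    Real.Gamma (1 / 2 - n) =
      Real.sqrt π * (-4) ^ n * n.factorial / (2 * n).factorial := by
  induction n with
  | zero => norm_num [Real.Gamma_one_half_eq]
  | succ n ih =>
    have hs : (1 / 2 - ((n : ℝ) + 1)) ≠ 0 := by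
      intro h
      have : (n : ℝ) = -1/2 := by linarith
      have := n.cast_nonneg (α := ℝ)
      linarith
    have key : Real.Gamma (1 / 2 - ((n : ℝ) + 1))
        = Real.Gamma (1 / 2 - n) / (1 / 2 - ((n : ℝ) + 1)) := by
      rw [eq_div_iff hs, mul_comm, ← Real.Gamma_add_one hs]
      congr 1
      ring
    have hcast : ((n + 1 : ℕ) : ℝ) = (n : ℝ) + 1 := by push_cast; ring
    rw [hcast, key, ih]
    have hfac : ((2 * (n + 1)).factorial : ℝ)
        = (2 * n + 2) * ((2 * n + 1) * (2 * n).factorial) := by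
      have : 2 * (n + 1) = (2 * n + 1) + 1 := by ring
      rw [this, Nat.factorial_succ, Nat.factorial_succ]
      push_cast; ring
    rw [hfac, Nat.factorial_succ]
    have h2 : ((2 * n).factorial : ℝ) ≠ 0 := by positivity
    have h3 : (n.factorial : ℝ) ≠ 0 := by positivity
    have h5 : (2 * (n : ℝ) + 1) ≠ 0 := by positivity
    have h6 : (2 * (n : ℝ) + 2) ≠ 0 := by positivity
    push_cast
    rw [div_div, div_eq_div_iff (by
      refine mul_ne_zero h2 hs) (by positivity)]
    ring

/-- The Mainardi function `M₁/₂(x) = e^{−x²/4}/√π`. -/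
theorem mainardi_half (x : ℝ) :
    (∑' k : ℕ, (-x) ^ k / (Nat.factorial k * Real.Gamma ((1 - (k : ℝ)) / 2)))
      = Real.exp (-x ^ 2 / 4) / Real.sqrt π := by
  set f : ℕ → ℝ := fun k => (-x) ^ k / (Nat.factorial k * Real.Gamma ((1 - (k : ℝ)) / 2))
    with hf
  have hπ : Real.sqrt π ≠ 0 := by positivity
  have heven : HasSum (fun n => f (2 * n)) (Real.exp (-x ^ 2 / 4) / Real.sqrt π) := by
    have h := (NormedSpace.expSeries_div_hasSum_exp (𝔸 := ℝ) (-x ^ 2 / 4)).div_const (Real.sqrt π)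
    rw [← Real.exp_eq_exp_ℝ] at h
    have hfun : (fun n => f (2 * n)) = fun n => (-x ^ 2 / 4) ^ n / n.factorial / Real.sqrt π := by
      funext n
      have hg : (1 - ((2 * n : ℕ) : ℝ)) / 2 = 1 / 2 - n := by push_cast; ring
      have hx : (-x) ^ (2 * n) = (x ^ 2) ^ n := by rw [pow_mul]; ring_nf
      have h2 : ((2 * n).factorial : ℝ) ≠ 0 := by positivity
      have h3 : (n.factorial : ℝ) ≠ 0 := by positivity
      have h4 : ((-4 : ℝ)) ^ n ≠ 0 := by apply pow_ne_zero; norm_num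
      have e1 : f (2 * n) = (x ^ 2) ^ n / ((-4) ^ n * n.factorial) / Real.sqrt π := by
        simp only [hf]
        rw [hg, gamma_half_sub, hx, mul_div_assoc', mul_div_cancel_left₀ _ h2]
        ring
      have e2 : (-x ^ 2 / 4 : ℝ) = x ^ 2 / (-4) := by ring
      rw [e1, e2, div_pow]
      ring
    rw [hfun]
    exact h
  have hodd : HasSum (fun n => f (2 * n + 1)) 0 := by
    have : (fun n => f (2 * n + 1)) = fun _ => (0 : ℝ) := by
      funext n
      have hg : (1 - ((2 * n + 1 : ℕ) : ℝ)) / 2 = -(n : ℝ) := by push_cast; ring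
      simp only [hf, hg, Real.Gamma_neg_nat_eq_zero, mul_zero, div_zero]
    rw [this]
    exact hasSum_zero
  have := (heven.even_add_odd hodd).tsum_eq
  rw [add_zero] at this
  exact this
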